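/- Finiteness of A_{IJ}(L) when I and J are nonempty: let n≥1, I,J⊆[0,n−1] nonempty with min(I)+min(J)≥n, and (m_i),(l_i),e,d integers. Then the set A_{IJ}(m,l,e,d) is finite. -/

import Mathlib

/-- Finiteness of `A_{IJ}(L)` when `I` and `J` are both nonempty. Here `a, b ∈ ℤ^n` are
encoded with 0-based indices: `p.1 ⟨j-1⟩` is `a_j` and `p.2 ⟨j-1⟩` is `b_j`, so that
`b_{n-i+1}` is `p.2 i.rev` for the index `i`. -/
theorem stmt5 (n : ℕ) (hn : 1 ≤ n) (I J : Finset ℕ)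
    (hI : I.Nonempty) (hJ : J.Nonempty)
    (hIsub : ∀ i ∈ I, i ≤ n - 1) (hJsub : ∀ j ∈ J, j ≤ n - 1)
    (hmin : n ≤ I.min' hI + J.min' hJ)
    (m l : ℕ → ℤ) (e d : ℤ) :
    {p : (Fin n → ℤ) × (Fin n → ℤ) |
      (∀ i j : Fin n, i ≤ j → p.1 i ≤ p.1 j) ∧
      (∀ i, n - J.min' hJ ≤ i → i ≤ n - 1 →
        ∑ j ∈ Finset.univ.filter (fun j : Fin n => i ≤ j.val), (p.1 j - e) ≤ m i) ∧
      (∀ i ∈ I, ∑ j ∈ Finset.univ.filter (fun j : Fin n => i ≤ j.val), (p.1 j - e) = m i) ∧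
      (∀ i, n - I.min' hI ≤ i → i ≤ n - 1 →
        -l i ≤ ∑ j ∈ Finset.univ.filter (fun j : Fin n => j.val < n - i), (p.1 j - e)) ∧
      (∀ i ∈ J, ∑ j ∈ Finset.univ.filter (fun j : Fin n => j.val < n - i), (p.1 j - e) = -l i) ∧
      (∀ i : Fin n, p.1 i - e = -(p.2 i.rev) + d)}.Finite := by
  have hi₁I : I.min' hI ∈ I := I.min'_mem hI
  have hj₁J : J.min' hJ ∈ J := J.min'_mem hJ
  set i₁ := I.min' hI with hi₁def
  set j₁ := J.min' hJ with hj₁def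
  have hi₁n : i₁ < n := by have := hIsub i₁ hi₁I; omega
  have hj₁n : j₁ < n := by have := hJsub j₁ hj₁J; omega
  have hc : n - j₁ ≤ i₁ := by omega
  set B : ℤ := |m i₁| + |l j₁| + (n : ℤ) * (|m i₁| + |l j₁|) with hB
  have hfin : (Set.univ.pi (fun _ : Fin n => Set.Icc (e - B) (e + B))).Finite :=
    Set.Finite.pi (fun _ => Set.finite_Icc _ _)
  apply Set.Finite.subset
    (hfin.image (fun a : Fin n → ℤ => (a, fun k : Fin n => d + e - a k.rev)))
  rintro ⟨a, b⟩ ⟨hmono, -, hIeq, -, hJeq, hab⟩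
  dsimp only at hmono hIeq hJeq hab
  have hmn : (0:ℤ) ≤ |m i₁| := abs_nonneg _
  have hln : (0:ℤ) ≤ |l j₁| := abs_nonneg _
  have hnpos : (0:ℤ) ≤ (n : ℤ) := by positivity
  have hprod0 : (0:ℤ) ≤ (n : ℤ) * (|m i₁| + |l j₁|) := by positivity
  have hprodm : (n:ℤ) * |m i₁| ≤ (n:ℤ) * (|m i₁| + |l j₁|) :=
    mul_le_mul_of_nonneg_left (by linarith) hnpos
  have hprodl : (n:ℤ) * |l j₁| ≤ (n:ℤ) * (|m i₁| + |l j₁|) :=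
    mul_le_mul_of_nonneg_left (by linarith) hnpos
  set S := Finset.univ.filter (fun j : Fin n => i₁ ≤ j.val) with hSdef
  set T := Finset.univ.filter (fun j : Fin n => j.val < n - j₁) with hTdef
  have hS : ∑ j ∈ S, (a j - e) = m i₁ := hIeq i₁ hi₁I
  have hT : ∑ j ∈ T, (a j - e) = -l j₁ := hJeq j₁ hj₁J
  set ii : Fin n := ⟨i₁, hi₁n⟩ with hiidef
  set cc : Fin n := ⟨n - j₁ - 1, by omega⟩ with hccdef
  have hmemS : ii ∈ S := by simp [hSdef, hiidef]
  have hmemT : cc ∈ T := by simp [hTdef, hccdef]; omega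
  have hScard : S.card ≤ n := le_trans (Finset.card_le_univ S) (by simp)
  have hTcard : T.card ≤ n := le_trans (Finset.card_le_univ T) (by simp)
  -- upper bound for a ii - e
  have hup : a ii - e ≤ |m i₁| := by
    have h1 : ∀ j ∈ S, a ii - e ≤ a j - e := by
      intro j hj
      have hj' : i₁ ≤ j.val := (Finset.mem_filter.mp hj).2
      have := hmono ii j (by exact Fin.le_def.mpr hj')
      linarith
    have h2 : S.card • (a ii - e) ≤ m i₁ := hS ▸ Finset.card_nsmul_le_sum S _ _ h1
    rw [nsmul_eq_mul] at h2
    have hc1 : (1:ℤ) ≤ S.card := by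
      exact_mod_cast Finset.card_pos.mpr ⟨ii, hmemS⟩
    rcases le_or_gt (a ii - e) 0 with h | h
    · linarith
    · have h3 : (1:ℤ) * (a ii - e) ≤ (S.card : ℤ) * (a ii - e) :=
        mul_le_mul_of_nonneg_right hc1 (le_of_lt h)
      have := le_abs_self (m i₁)
      linarith
  -- lower bound for a cc - e
  have hlow : -|l j₁| ≤ a cc - e := by
    have h1 : ∀ j ∈ T, a j - e ≤ a cc - e := by
      intro j hj
      have hj' : j.val < n - j₁ := (Finset.mem_filter.mp hj).2
      have := hmono j cc (by simp [Fin.le_def, hccdef]; omega)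
      linarith
    have h2 : -l j₁ ≤ T.card • (a cc - e) := hT ▸ Finset.sum_le_card_nsmul T _ _ h1
    rw [nsmul_eq_mul] at h2
    have hc1 : (1:ℤ) ≤ T.card := by
      exact_mod_cast Finset.card_pos.mpr ⟨cc, hmemT⟩
    rcases le_or_gt 0 (a cc - e) with h | h
    · linarith
    · have h3 : (T.card : ℤ) * (a cc - e) ≤ (1:ℤ) * (a cc - e) :=
        mul_le_mul_of_nonpos_right hc1 (le_of_lt h)
      have := le_abs_self (l j₁)
      linarith
  have hccii : a cc ≤ a ii := hmono cc ii (by simp [Fin.le_def, hccdef, hiidef]; omega)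
  -- all coordinates bounded
  have hboundU : ∀ k : Fin n, a k ≤ e + B := by
    intro k
    rcases lt_or_ge k.val i₁ with hk | hk
    · have := hmono k ii (le_of_lt (by exact Fin.lt_def.mpr hk))
      linarith
    · have hkS : k ∈ S := by simp [hSdef, hk]
      have hsplit : (a k - e) + ∑ j ∈ S.erase k, (a j - e) = m i₁ := by
        rw [← hS]; exact Finset.add_sum_erase S (fun j => a j - e) hkS
      have hterm : ∀ j ∈ S.erase k, -|l j₁| ≤ a j - e := by
        intro j hj
        have hj' : i₁ ≤ j.val := (Finset.mem_filter.mp (Finset.mem_of_mem_erase hj)).2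
        have := hmono cc j (by simp [Fin.le_def, hccdef]; omega)
        linarith
      have h2 : (S.erase k).card • (-|l j₁|) ≤ ∑ j ∈ S.erase k, (a j - e) :=
        Finset.card_nsmul_le_sum _ _ _ hterm
      rw [nsmul_eq_mul] at h2
      have hcard : ((S.erase k).card : ℤ) ≤ n := by
        have := le_trans (Finset.card_erase_le (a := k) (s := S)) hScard
        exact_mod_cast this
      have h3 : (n : ℤ) * (-|l j₁|) ≤ ((S.erase k).card : ℤ) * (-|l j₁|) :=
        mul_le_mul_of_nonpos_right hcard (by linarith)
      have h4 := le_abs_self (m i₁)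
      have h5 : (n:ℤ) * (-|l j₁|) = -((n:ℤ) * |l j₁|) := by ring
      linarith
  have hboundL : ∀ k : Fin n, e - B ≤ a k := by
    intro k
    rcases le_or_gt (n - j₁) k.val with hk | hk
    · have := hmono cc k (by simp [Fin.le_def, hccdef]; omega)
      linarith
    · have hkT : k ∈ T := by simp [hTdef, hk]
      have hsplit : (a k - e) + ∑ j ∈ T.erase k, (a j - e) = -l j₁ := by
        rw [← hT]; exact Finset.add_sum_erase T (fun j => a j - e) hkT
      have hterm : ∀ j ∈ T.erase k, a j - e ≤ |m i₁| := by
        intro j hj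
        have hj' : j.val < n - j₁ := (Finset.mem_filter.mp (Finset.mem_of_mem_erase hj)).2
        have := hmono j ii (by simp [Fin.le_def, hiidef]; omega)
        linarith
      have h2 : ∑ j ∈ T.erase k, (a j - e) ≤ (T.erase k).card • |m i₁| :=
        Finset.sum_le_card_nsmul _ _ _ hterm
      rw [nsmul_eq_mul] at h2
      have hcard : ((T.erase k).card : ℤ) ≤ n := by
        have := le_trans (Finset.card_erase_le (a := k) (s := T)) hTcard
        exact_mod_cast this
      have h3 : ((T.erase k).card : ℤ) * |m i₁| ≤ (n : ℤ) * |m i₁| :=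
        mul_le_mul_of_nonneg_right hcard hmn
      have h4 := le_abs_self (l j₁)
      linarith
  refine ⟨a, fun k _ => ⟨hboundL k, hboundU k⟩, ?_⟩
  refine Prod.ext rfl ?_
  funext k
  have := hab k.rev
  rw [Fin.rev_rev] at this
  show d + e - a k.rev = b k
  linarith
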